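/- arXiv:1311.2808 — 2 statements merged into one kernel-verified Lean document; each statement's English description precedes it below -/
import Mathlib

section
/- Let X and Y be Banach spaces with Y a Gelfand-Phillips space. Then a bounded linear operator T : X → Y is a weak* Dunford-Pettis operator if and only if it is a Dunford-Pettis operator. -/
open Filter Topology

/-- A sequence in a normed space is weakly null if every continuous linear functional
sends it to a null sequence. -/
def WeaklyNull {E : Type*} [NormedAddCommGroup E] [NormedSpace ℝ E] (x : ℕ → E) : Prop :=
  ∀ f : E →L[ℝ] ℝ, Tendsto (fun n => f (x n)) atTop (𝓝 0)

/-- A sequence of continuous linear functionals is weak* null if it converges to zero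
pointwise. -/
def WeakStarNull {F : Type*} [NormedAddCommGroup F] [NormedSpace ℝ F]
    (f : ℕ → F →L[ℝ] ℝ) : Prop :=
  ∀ y : F, Tendsto (fun n => f n y) atTop (𝓝 0)

/-- A bounded linear operator `T : E → F` is a weak* Dunford-Pettis operator if
`f_n (T x_n) → 0` whenever `(x_n)` is weakly null in `E` and `(f_n)` is weak* null in `F*`. -/
def IsWeakStarDunfordPettis {E F : Type*} [NormedAddCommGroup E] [NormedSpace ℝ E]
    [NormedAddCommGroup F] [NormedSpace ℝ F] (T : E →L[ℝ] F) : Prop :=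
  ∀ (x : ℕ → E) (f : ℕ → F →L[ℝ] ℝ), WeaklyNull x → WeakStarNull f →
    Tendsto (fun n => f n (T (x n))) atTop (𝓝 0)

/-- A bounded linear operator `T : X → Y` is a Dunford-Pettis operator if it maps weakly
null sequences to norm null sequences. -/
def IsDunfordPettisOp {X Y : Type*} [NormedAddCommGroup X] [NormedSpace ℝ X]
    [NormedAddCommGroup Y] [NormedSpace ℝ Y] (T : X →L[ℝ] Y) : Prop :=
  ∀ x : ℕ → X, WeaklyNull x → Tendsto (fun n => ‖T (x n)‖) atTop (𝓝 0)

/-- A norm bounded set `A ⊆ Y` is limited if every weak* null sequence in `Y*` converges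
to zero uniformly on `A`. -/
def IsLimitedSet {Y : Type*} [NormedAddCommGroup Y] [NormedSpace ℝ Y] (A : Set Y) : Prop :=
  Bornology.IsBounded A ∧
    ∀ g : ℕ → Y →L[ℝ] ℝ, WeakStarNull g →
      ∀ ε > (0 : ℝ), ∃ N : ℕ, ∀ n ≥ N, ∀ y ∈ A, |g n y| ≤ ε

/-- A Banach space is a Gelfand-Phillips space if every limited subset is relatively
(norm) compact. -/
def GelfandPhillips (Y : Type*) [NormedAddCommGroup Y] [NormedSpace ℝ Y] : Prop :=
  ∀ A : Set Y, IsLimitedSet A → IsCompact (closure A)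

/-- A weakly null sequence is norm bounded (uniform boundedness principle). -/
lemma weaklyNull_bdd {E : Type*} [NormedAddCommGroup E] [NormedSpace ℝ E]
    {x : ℕ → E} (h : WeaklyNull x) : ∃ C, ∀ n, ‖x n‖ ≤ C := by
  obtain ⟨C, hC⟩ := banach_steinhaus (E := StrongDual ℝ E) (F := ℝ)
    (g := fun n => NormedSpace.inclusionInDoubleDual ℝ E (x n)) (fun f => by
      obtain ⟨C, hC⟩ := (h f).norm.bddAbove_range
      exact ⟨C, fun i => hC (Set.mem_range_self i)⟩)
  exact ⟨C, fun n => by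
    have := (NormedSpace.inclusionInDoubleDualLi (𝕜 := ℝ) (E := E)).norm_map (x n)
    rw [← this]; exact hC n⟩

/-- A weak* null sequence of functionals is norm bounded. -/
lemma weakStarNull_bdd {F : Type*} [NormedAddCommGroup F] [NormedSpace ℝ F] [CompleteSpace F]
    {f : ℕ → F →L[ℝ] ℝ} (h : WeakStarNull f) : ∃ C, ∀ n, ‖f n‖ ≤ C :=
  banach_steinhaus (fun y => by
    obtain ⟨C, hC⟩ := (h y).norm.bddAbove_range
    exact ⟨C, fun i => hC (Set.mem_range_self i)⟩)

/-- If `Y` is a Gelfand-Phillips space, then a bounded linear operator `T : X → Y` is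
weak* Dunford-Pettis iff it is Dunford-Pettis. -/
theorem weakStarDunfordPettis_iff_dunfordPettis_of_gelfandPhillips
    {X Y : Type*}
    [NormedAddCommGroup X] [NormedSpace ℝ X] [CompleteSpace X]
    [NormedAddCommGroup Y] [NormedSpace ℝ Y] [CompleteSpace Y]
    (hY : GelfandPhillips Y)
    (T : X →L[ℝ] Y) :
    IsWeakStarDunfordPettis T ↔ IsDunfordPettisOp T := by
  constructor
  · -- weak* DP → DP, using Gelfand-Phillips
    intro hT x hx
    obtain ⟨C, hC⟩ := weaklyNull_bdd hx
    set A : Set Y := Set.range fun n => T (x n) with hA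
    have hlim : IsLimitedSet A := by
      constructor
      · rw [isBounded_iff_forall_norm_le]
        refine ⟨‖T‖ * C, ?_⟩
        rintro y ⟨n, rfl⟩
        calc ‖T (x n)‖ ≤ ‖T‖ * ‖x n‖ := T.le_opNorm _
          _ ≤ ‖T‖ * C := by
            exact mul_le_mul_of_nonneg_left (hC n) (norm_nonneg _)
      · intro g hg ε hε
        by_contra hcon
        push_neg at hcon
        choose n hn y hy hgy using hcon
        choose m hm using hy
        rcases em (∃ v, (m ⁻¹' {v}).Infinite) with ⟨v, hv'⟩ | hinf
        · -- some inner index value occurs infinitely often: pigeonhole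
          have h0 := hg (T (x v))
          rw [Metric.tendsto_atTop] at h0
          obtain ⟨K, hK⟩ := h0 ε hε
          obtain ⟨N, hNmem, hNK⟩ := hv'.exists_gt K
          have h1 : |g (n N) (T (x v))| < ε := by
            have := hK (n N) (le_trans hNK.le (hn N))
            rwa [Real.dist_eq, sub_zero] at this
          have h2 : ε < |g (n N) (T (x v))| := by
            have := hgy N
            rw [← hm N, hNmem] at this
            exact this
          linarith
        · -- the inner indices are unbounded: extract a subsequence
          push_neg at hinf
          have hfib : ∀ v, (m ⁻¹' {v}).Finite := fun v => hinf v
          have hfreq : ∀ j, ∃ᶠ k in atTop, j < m k := by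
            intro j
            by_contra hcontra
            rw [not_frequently] at hcontra
            simp only [not_lt] at hcontra
            rw [eventually_atTop] at hcontra
            obtain ⟨K, hK⟩ := hcontra
            have hsub : Set.Ici K ⊆ ⋃ v ∈ Set.Iic j, m ⁻¹' {v} := by
              intro k hk
              exact Set.mem_biUnion (hK k hk) rfl
            exact Set.Ici_infinite K
              (((Set.finite_Iic j).biUnion (fun v _ => hfib v)).subset hsub)
          obtain ⟨φ, hφmono, hφ⟩ := extraction_forall_of_frequently hfreq
          have hmφ : Tendsto (fun j => m (φ j)) atTop atTop :=
            tendsto_atTop_mono (fun j => (hφ j).le) tendsto_id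
          have hnφ : Tendsto (fun j => n (φ j)) atTop atTop :=
            tendsto_atTop_mono (fun j => le_trans (hφmono.le_apply) (hn (φ j))) tendsto_id
          have hx' : WeaklyNull (fun j => x (m (φ j))) := fun F => (hx F).comp hmφ
          have hg' : WeakStarNull (fun j => g (n (φ j))) := fun yy => (hg yy).comp hnφ
          have htend := hT _ _ hx' hg'
          rw [Metric.tendsto_atTop] at htend
          obtain ⟨J, hJ⟩ := htend ε hε
          have h1 : |g (n (φ J)) (T (x (m (φ J))))| < ε := by
            have := hJ J le_rfl
            rwa [Real.dist_eq, sub_zero] at this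
          have h2 : ε < |g (n (φ J)) (T (x (m (φ J))))| := by
            have := hgy (φ J)
            rwa [← hm (φ J)] at this
          linarith
    have hK : IsCompact (closure A) := hY A hlim
    apply tendsto_of_subseq_tendsto
    intro ns hns
    obtain ⟨a, _, φ, hφmono, hφtend⟩ :=
      hK.tendsto_subseq (x := fun i => T (x (ns i)))
        (fun i => subset_closure ⟨ns i, rfl⟩)
    have ha : a = 0 := by
      apply NormedSpace.eq_zero_of_forall_dual_eq_zero ℝ
      intro f
      have h1 : Tendsto (fun i => f (T (x (ns (φ i))))) atTop (𝓝 (f a)) :=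
        (f.continuous.tendsto a).comp hφtend
      have h2 : Tendsto (fun i => f (T (x (ns (φ i))))) atTop (𝓝 0) :=
        (hx (f.comp T)).comp (hns.comp hφmono.tendsto_atTop)
      exact tendsto_nhds_unique h1 h2
    subst ha
    exact ⟨φ, by simpa using hφtend.norm⟩
  · -- DP → weak* DP
    intro hT x f hx hf
    obtain ⟨C, hC⟩ := weakStarNull_bdd hf
    have hTx := hT x hx
    refine squeeze_zero_norm (a := fun n => C * ‖T (x n)‖) ?_ ?_
    · intro n
      calc ‖f n (T (x n))‖ ≤ ‖f n‖ * ‖T (x n)‖ := (f n).le_opNorm _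
        _ ≤ C * ‖T (x n)‖ := mul_le_mul_of_nonneg_right (hC n) (norm_nonneg _)
    · simpa using hTx.const_mul C
end

section
/- There exist positive linear operators S, T : L¹[0,1] → c, where c is the Banach lattice of convergent real sequences with the supremum norm, such that 0 ≤ S ≤ T, T is a weak* Dunford-Pettis operator, and S is not a weak* Dunford-Pettis operator. (In particular, the σ-Dedekind completeness assumption on the range space cannot be dropped in the domination theorem for weak* Dunford-Pettis operators.) -/
open Filter Topology MeasureTheory

/-- The Banach lattice `L¹[0,1]` of Lebesgue integrable functions on `[0,1]`,
with the `L¹` norm and the pointwise a.e. order. -/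
noncomputable abbrev L1unitInterval : Type :=
  Lp ℝ 1 ((volume : Measure ℝ).restrict (Set.Icc (0 : ℝ) 1))

/-- The Banach lattice `c` of convergent real sequences with the supremum norm and the
coordinatewise order, realized as the continuous real-valued functions on the one-point
compactification of `ℕ` (a continuous function on `OnePoint ℕ` is precisely a convergent
sequence together with its limit, the norm is the sup norm and the order is pointwise). -/
abbrev ConvergentSeq : Type := C(OnePoint ℕ, ℝ)

namespace WSDPCounterexample

open Real Set
open scoped ENNReal RealInnerProductSpace

noncomputable abbrev μ₀ : Measure ℝ := (volume : Measure ℝ).restrict (Set.Icc (0:ℝ) 1)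

instance : IsProbabilityMeasure μ₀ := ⟨by simp [μ₀]⟩

/-! ### Trigonometric integrals -/

noncomputable def cosF (m : ℕ) : ℝ → ℝ := fun t => Real.cos (2*π*m*t)

lemma cosF_cont (m : ℕ) : Continuous (cosF m) := by unfold cosF; continuity

lemma cosF_abs_le (m : ℕ) (t : ℝ) : |cosF m t| ≤ 1 := Real.abs_cos_le_one _

lemma cosF_memL2 (m : ℕ) : MemLp (cosF m) 2 μ₀ :=
  MemLp.of_bound (cosF_cont m).aestronglyMeasurable 1
    (Filter.Eventually.of_forall fun t => by
      simpa [cosF] using Real.abs_cos_le_one (2*π*m*t))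

lemma integral_cosZ (j : ℤ) (hj : j ≠ 0) :
    ∫ t in (0:ℝ)..1, Real.cos (2*π*j*t) = 0 := by
  have hc : (2*π*(j:ℝ)) ≠ 0 := by simp [Real.pi_ne_zero, hj]
  have h := intervalIntegral.integral_comp_mul_left (a := (0:ℝ)) (b := 1)
    (f := fun x => Real.cos x) (c := 2*π*j) hc
  simp only [mul_zero, mul_one] at h
  rw [h, integral_cos, Real.sin_zero]
  have : Real.sin (2*π*j) = 0 := by
    have := Real.sin_int_mul_pi (2*j)
    push_cast at this ⊢
    rw [show 2*π*(j:ℝ) = (2*(j:ℝ))*π by ring]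
    exact this
  rw [this]; simp

lemma integral_cosZ' (j : ℤ) :
    ∫ t in (0:ℝ)..1, Real.cos (2*π*j*t) = if j = 0 then 1 else 0 := by
  rcases eq_or_ne j 0 with h | h
  · simp [h]
  · rw [if_neg h]; exact integral_cosZ j h

lemma integral_cos_mul_cos01 (k l : ℕ) (hl : l ≠ 0) :
    ∫ t in (0:ℝ)..1, Real.cos (2*π*k*t) * Real.cos (2*π*l*t)
      = if k = l then 1/2 else 0 := by
  have hprod : ∀ t : ℝ, Real.cos (2*π*k*t) * Real.cos (2*π*l*t)
      = (Real.cos (2*π*((k:ℤ)-(l:ℤ))*t) + Real.cos (2*π*((k:ℤ)+(l:ℤ))*t))/2 := by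
    intro t
    have h1 := Real.cos_add (2*π*k*t) (2*π*l*t)
    have h2 := Real.cos_sub (2*π*k*t) (2*π*l*t)
    have e1 : (2*π*((k:ℤ)-(l:ℤ))*t : ℝ) = 2*π*k*t - 2*π*l*t := by push_cast; ring
    have e2 : (2*π*((k:ℤ)+(l:ℤ))*t : ℝ) = 2*π*k*t + 2*π*l*t := by push_cast; ring
    rw [e1, e2, h1, h2]; ring
  rw [intervalIntegral.integral_congr (g := fun t =>
      (Real.cos (2*π*((k:ℤ)-(l:ℤ))*t) + Real.cos (2*π*((k:ℤ)+(l:ℤ))*t))/2)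
    (fun t _ => hprod t)]
  have i1 : IntervalIntegrable (fun t => Real.cos (2*π*((k:ℤ)-(l:ℤ))*t)) volume 0 1 :=
    (by continuity : Continuous fun t : ℝ => Real.cos (2*π*((k:ℤ)-(l:ℤ))*t)).intervalIntegrable 0 1
  have i2 : IntervalIntegrable (fun t => Real.cos (2*π*((k:ℤ)+(l:ℤ))*t)) volume 0 1 :=
    (by continuity : Continuous fun t : ℝ => Real.cos (2*π*((k:ℤ)+(l:ℤ))*t)).intervalIntegrable 0 1
  simp only [div_eq_mul_inv]
  have A := integral_cosZ' ((k:ℤ)-(l:ℤ))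
  have B := integral_cosZ ((k:ℤ)+(l:ℤ)) (by omega)
  push_cast at A B
  rw [intervalIntegral.integral_mul_const, intervalIntegral.integral_add i1 i2]
  push_cast
  rw [A, B]
  rcases eq_or_ne k l with h | h
  · subst h
    norm_num
  · simp only [sub_eq_zero]
    rw [if_neg (by exact_mod_cast h), if_neg h]
    ring

lemma integral_μ₀_eq (g : ℝ → ℝ) :
    ∫ t, g t ∂μ₀ = ∫ t in (0:ℝ)..1, g t := by
  rw [intervalIntegral.integral_of_le zero_le_one, ← integral_Icc_eq_integral_Ioc]

/-! ### L² preliminaries -/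

lemma memL1_of_L2 (f : Lp ℝ 2 μ₀) : MemLp (f : ℝ → ℝ) 1 μ₀ :=
  (Lp.memLp f).mono_exponent (by norm_num)

noncomputable def L2toL1 : Lp ℝ 2 μ₀ →L[ℝ] Lp ℝ 1 μ₀ := by
  refine LinearMap.mkContinuous
    { toFun := fun f => (memL1_of_L2 f).toLp f
      map_add' := fun f g => ?_
      map_smul' := fun c f => ?_ } 1 (fun f => ?_)
  · ext1
    filter_upwards [MemLp.coeFn_toLp (memL1_of_L2 (f+g)),
      MemLp.coeFn_toLp (memL1_of_L2 f), MemLp.coeFn_toLp (memL1_of_L2 g),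
      Lp.coeFn_add f g,
      Lp.coeFn_add ((memL1_of_L2 f).toLp f) ((memL1_of_L2 g).toLp g)] with t h1 h2 h3 h4 h5
    simp only [Pi.add_apply] at h4 h5 ⊢
    rw [h1, h4, h5, h2, h3]
  · ext1
    filter_upwards [MemLp.coeFn_toLp (memL1_of_L2 (c • f)),
      MemLp.coeFn_toLp (memL1_of_L2 f), Lp.coeFn_smul c f,
      Lp.coeFn_smul c ((memL1_of_L2 f).toLp f)] with t h1 h2 h3 h4
    simp only [RingHom.id_apply]
    simp only [Pi.smul_apply] at h3 h4 ⊢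
    rw [h1, h3, h4, h2]
  · rw [one_mul, Lp.norm_def, Lp.norm_def]
    have h1 : eLpNorm ((memL1_of_L2 f).toLp f : ℝ → ℝ) 1 μ₀ = eLpNorm (f : ℝ → ℝ) 1 μ₀ :=
      eLpNorm_congr_ae (MemLp.coeFn_toLp _)
    rw [LinearMap.coe_mk, AddHom.coe_mk, h1]
    exact ENNReal.toReal_mono (Lp.eLpNorm_ne_top f)
      (eLpNorm_le_eLpNorm_of_exponent_le (by norm_num) (Lp.aestronglyMeasurable f))

lemma L2toL1_coeFn (f : Lp ℝ 2 μ₀) : (L2toL1 f : ℝ → ℝ) =ᵐ[μ₀] f :=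
  MemLp.coeFn_toLp (memL1_of_L2 f)

noncomputable def cosL2 (m : ℕ) : Lp ℝ 2 μ₀ := (cosF_memL2 (m+1)).toLp (cosF (m+1))

lemma cosL2_coeFn (m : ℕ) : (cosL2 m : ℝ → ℝ) =ᵐ[μ₀] cosF (m+1) :=
  MemLp.coeFn_toLp (cosF_memL2 (m+1))

lemma inner_cosL2 (i j : ℕ) :
    ⟪cosL2 i, cosL2 j⟫ = ∫ t in (0:ℝ)..1, cosF (i+1) t * cosF (j+1) t := by
  rw [MeasureTheory.L2.inner_def, ← integral_μ₀_eq]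
  refine integral_congr_ae ?_
  filter_upwards [cosL2_coeFn i, cosL2_coeFn j] with t h1 h2
  rw [show (cosL2 i : ℝ → ℝ) t = cosF (i+1) t from h1,
    show (cosL2 j : ℝ → ℝ) t = cosF (j+1) t from h2]
  simp [RCLike.inner_apply]
  ring

lemma orthonormal_cos : Orthonormal ℝ (fun m => Real.sqrt 2 • cosL2 m) := by
  rw [orthonormal_iff_ite]
  intro i j
  rw [inner_smul_left, inner_smul_right, inner_cosL2]
  have key := integral_cos_mul_cos01 (i+1) (j+1) (Nat.succ_ne_zero j)
  unfold cosF
  push_cast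
  push_cast at key
  rw [key]
  have h2 : Real.sqrt 2 * Real.sqrt 2 = 2 := Real.mul_self_sqrt (by norm_num)
  rcases eq_or_ne i j with h | h
  · subst h
    simp only [if_pos rfl, starRingEnd_apply, star_trivial]
    rw [← mul_assoc, h2]
    norm_num
  · rw [if_neg (by omega), if_neg h]
    ring

lemma weaklyNull_cosL1 (f : (Lp ℝ 1 μ₀) →L[ℝ] ℝ) :
    Tendsto (fun n => f (L2toL1 (cosL2 n))) atTop (𝓝 0) := by
  set F : (Lp ℝ 2 μ₀) →L[ℝ] ℝ := f.comp L2toL1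
  set g : Lp ℝ 2 μ₀ := (InnerProductSpace.toDual ℝ (Lp ℝ 2 μ₀)).symm F
  have hFg : ∀ x, F x = ⟪g, x⟫ := by
    intro x
    have : InnerProductSpace.toDual ℝ (Lp ℝ 2 μ₀) g = F :=
      (InnerProductSpace.toDual ℝ (Lp ℝ 2 μ₀)).apply_symm_apply F
    rw [← this, InnerProductSpace.toDual_apply_apply]
  have hsum := (orthonormal_cos.inner_products_summable (x := g)).tendsto_atTop_zero
  have hinner : Tendsto (fun n => ⟪(Real.sqrt 2 • cosL2 n : Lp ℝ 2 μ₀), g⟫) atTop (𝓝 0) := by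
    rw [tendsto_zero_iff_norm_tendsto_zero]
    have hs := hsum.sqrt
    rw [Real.sqrt_zero] at hs
    exact hs.congr fun n => Real.sqrt_sq (norm_nonneg _)
  have key : Tendsto (fun n => ⟪g, cosL2 n⟫) atTop (𝓝 0) := by
    have h2 : Real.sqrt 2 ≠ 0 := by positivity
    have := hinner.const_mul (Real.sqrt 2)⁻¹
    simp only [mul_zero] at this
    refine this.congr fun n => ?_
    rw [real_inner_comm, inner_smul_right, ← mul_assoc, inv_mul_cancel₀ h2, one_mul]
  refine key.congr fun n => ?_
  rw [← hFg (cosL2 n)]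
  rfl

/-! ### Riemann-Lebesgue -/

lemma riemann_lebesgue_cos (x : ℝ → ℝ) (hx : Integrable x μ₀) :
    Tendsto (fun m : ℕ => ∫ t, x t * cosF m t ∂μ₀) atTop (𝓝 0) := by
  set φ : ℝ → ℝ := (Set.Icc (0:ℝ) 1).indicator x with hφ
  have hφi : Integrable φ volume := by
    rw [hφ, integrable_indicator_iff measurableSet_Icc]
    exact hx
  set fc : ℝ → ℂ := fun t => (φ t : ℂ) with hfc
  have hfci : Integrable fc volume := hφi.ofReal
  have hRL := Real.tendsto_integral_exp_smul_cocompact fc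
  have hnat : Tendsto (fun m : ℕ => (m : ℝ)) atTop (cocompact ℝ) := by
    rw [cocompact_eq_atBot_atTop]
    exact tendsto_natCast_atTop_atTop.mono_right le_sup_right
  have h0 : Tendsto (fun m : ℕ => ∫ v : ℝ, Real.fourierChar (-(v * (m:ℝ))) • fc v)
      atTop (𝓝 0) := hRL.comp hnat
  have h1 := (Complex.continuous_re.tendsto 0).comp h0
  simp only [Function.comp_def, Complex.zero_re] at h1
  refine h1.congr fun m => ?_
  have hint : Integrable (fun v : ℝ => Real.fourierChar (-(v * (m:ℝ))) • fc v) volume := by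
    have := (Real.fourierIntegral_convergent_iff (f := fc) (w := (m:ℝ))).2 hfci
    simpa [mul_comm] using this
  rw [← RCLike.re_to_complex, ← integral_re hint]
  simp only [RCLike.re_to_complex]
  have e1 : ∀ v : ℝ, (Real.fourierChar (-(v * (m:ℝ))) • fc v).re = φ v * cosF m v := by
    intro v
    rw [Circle.smul_def, Real.fourierChar_apply]
    show (Complex.exp (↑(2 * π * -(v * (m:ℝ))) * Complex.I) * (φ v : ℂ)).re = _
    rw [Complex.mul_re]
    simp only [Complex.ofReal_im, mul_zero, sub_zero, Complex.ofReal_re,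
      Complex.exp_ofReal_mul_I_re]
    unfold cosF
    rw [show (2 * π * -(v * (m:ℝ))) = -(2*π*m*v) by ring, Real.cos_neg]
    ring
  simp only [e1]
  have e2 : ∀ v : ℝ, φ v * cosF m v
      = (Set.Icc (0:ℝ) 1).indicator (fun t => x t * cosF m t) v := by
    intro v
    rw [hφ]
    by_cases h : v ∈ Set.Icc (0:ℝ) 1 <;>
      simp [Set.indicator_of_mem, Set.indicator_of_notMem, h]
  simp only [e2]
  rw [integral_indicator measurableSet_Icc]


/-! ### The operators -/

noncomputable def hW (m : ℕ) : ℝ → ℝ := fun t => (1 + cosF m t)/2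

lemma hW_cont (m : ℕ) : Continuous (hW m) := by
  unfold hW
  exact ((continuous_const.add (cosF_cont m)).div_const 2)

lemma hW_nonneg (m : ℕ) (t : ℝ) : 0 ≤ hW m t := by
  unfold hW
  have := neg_abs_le (cosF m t)
  have h1 := cosF_abs_le m t
  have : (-1 : ℝ) ≤ cosF m t := by
    have := abs_le.mp h1
    linarith [this.1]
  linarith

lemma hW_le_one (m : ℕ) (t : ℝ) : hW m t ≤ 1 := by
  unfold hW
  have h1 := (abs_le.mp (cosF_abs_le m t)).2
  linarith

lemma hW_abs_le (m : ℕ) (t : ℝ) : |hW m t| ≤ 1 := by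
  rw [abs_of_nonneg (hW_nonneg m t)]
  exact hW_le_one m t

lemma integrable_hW_mul (x : Lp ℝ 1 μ₀) (m : ℕ) :
    Integrable (fun t => hW m t * x t) μ₀ :=
  (L1.integrable_coeFn x).bdd_mul (hW_cont m).aestronglyMeasurable
    (c := 1) (Filter.Eventually.of_forall fun t => by simpa using hW_abs_le m t)

lemma integrable_mul_cos (g : ℝ → ℝ) (hg : Integrable g μ₀) (m : ℕ) :
    Integrable (fun t => g t * cosF m t) μ₀ := by
  have := hg.bdd_mul (f := cosF m) (cosF_cont m).aestronglyMeasurable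
    (c := 1) (Filter.Eventually.of_forall fun t => by simpa using cosF_abs_le m t)
  exact this.congr (Filter.Eventually.of_forall fun t => mul_comm _ _)

lemma hW_split (g : ℝ → ℝ) (hg : Integrable g μ₀) (m : ℕ) :
    ∫ t, hW m t * g t ∂μ₀
      = (∫ t, g t ∂μ₀)/2 + (∫ t, g t * cosF m t ∂μ₀)/2 := by
  have hpt : ∀ t, hW m t * g t = g t / 2 + (g t * cosF m t)/2 := by
    intro t; unfold hW; ring
  rw [integral_congr_ae (Filter.Eventually.of_forall hpt),
    integral_add (hg.div_const 2) ((integrable_mul_cos g hg m).div_const 2),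
    integral_div, integral_div]

lemma Sseq_tendsto (x : Lp ℝ 1 μ₀) :
    Tendsto (fun m : ℕ => ∫ t, hW m t * x t ∂μ₀) atTop (𝓝 ((∫ t, x t ∂μ₀)/2)) := by
  have h := (riemann_lebesgue_cos x (L1.integrable_coeFn x)).div_const 2
  rw [zero_div] at h
  have h2 := (tendsto_const_nhds (x := (∫ t, x t ∂μ₀)/2) (f := atTop (α := ℕ))).add h
  rw [add_zero] at h2
  refine h2.congr fun m => ?_
  rw [hW_split x (L1.integrable_coeFn x) m]

noncomputable def Smap (x : Lp ℝ 1 μ₀) : C(OnePoint ℕ, ℝ) :=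
  OnePoint.continuousMapMkNat (fun m => ∫ t, hW m t * x t ∂μ₀)
    ((∫ t, x t ∂μ₀)/2) (Sseq_tendsto x)

@[simp] lemma Smap_coe (x : Lp ℝ 1 μ₀) (m : ℕ) :
    Smap x (m : OnePoint ℕ) = ∫ t, hW m t * x t ∂μ₀ := rfl

@[simp] lemma Smap_infty (x : Lp ℝ 1 μ₀) :
    Smap x OnePoint.infty = (∫ t, x t ∂μ₀)/2 := rfl

noncomputable def Tmap (x : Lp ℝ 1 μ₀) : C(OnePoint ℕ, ℝ) :=
  ContinuousMap.const _ (∫ t, x t ∂μ₀)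

@[simp] lemma Tmap_apply (x : Lp ℝ 1 μ₀) (p : OnePoint ℕ) :
    Tmap x p = ∫ t, x t ∂μ₀ := rfl

lemma integral_add_L1 (x y : Lp ℝ 1 μ₀) :
    ∫ t, (x + y : Lp ℝ 1 μ₀) t ∂μ₀ = (∫ t, x t ∂μ₀) + ∫ t, y t ∂μ₀ := by
  rw [integral_congr_ae (Lp.coeFn_add x y)]
  exact integral_add (L1.integrable_coeFn x) (L1.integrable_coeFn y)

lemma integral_smul_L1 (c : ℝ) (x : Lp ℝ 1 μ₀) :
    ∫ t, (c • x : Lp ℝ 1 μ₀) t ∂μ₀ = c * ∫ t, x t ∂μ₀ := by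
  rw [integral_congr_ae (Lp.coeFn_smul c x)]
  simp only [Pi.smul_apply, smul_eq_mul]
  exact integral_const_mul c _

lemma integral_hW_add (x y : Lp ℝ 1 μ₀) (m : ℕ) :
    ∫ t, hW m t * (x + y : Lp ℝ 1 μ₀) t ∂μ₀
      = (∫ t, hW m t * x t ∂μ₀) + ∫ t, hW m t * y t ∂μ₀ := by
  rw [← integral_add (integrable_hW_mul x m) (integrable_hW_mul y m)]
  refine integral_congr_ae ?_
  filter_upwards [Lp.coeFn_add x y] with t ht
  rw [ht]
  simp only [Pi.add_apply]
  ring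

lemma integral_hW_smul (c : ℝ) (x : Lp ℝ 1 μ₀) (m : ℕ) :
    ∫ t, hW m t * (c • x : Lp ℝ 1 μ₀) t ∂μ₀ = c * ∫ t, hW m t * x t ∂μ₀ := by
  rw [← integral_const_mul c]
  refine integral_congr_ae ?_
  filter_upwards [Lp.coeFn_smul c x] with t ht
  rw [ht]
  simp only [Pi.smul_apply, smul_eq_mul]
  ring

lemma norm_integral_le_L1 (x : Lp ℝ 1 μ₀) : ‖∫ t, x t ∂μ₀‖ ≤ ‖x‖ := by
  rw [L1.norm_eq_integral_norm]
  exact norm_integral_le_integral_norm _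

lemma norm_integral_hW_le (x : Lp ℝ 1 μ₀) (m : ℕ) :
    ‖∫ t, hW m t * x t ∂μ₀‖ ≤ ‖x‖ := by
  rw [L1.norm_eq_integral_norm]
  refine norm_integral_le_of_norm_le (L1.integrable_coeFn x).norm ?_
  refine Filter.Eventually.of_forall fun t => ?_
  rw [norm_mul]
  calc ‖hW m t‖ * ‖x t‖ ≤ 1 * ‖x t‖ := by
        apply mul_le_mul_of_nonneg_right _ (norm_nonneg _)
        simpa using hW_abs_le m t
    _ = ‖x t‖ := one_mul _

noncomputable def Sop : Lp ℝ 1 μ₀ →L[ℝ] C(OnePoint ℕ, ℝ) := by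
  refine LinearMap.mkContinuous
    { toFun := Smap
      map_add' := fun x y => ?_
      map_smul' := fun c x => ?_ } 1 (fun x => ?_)
  · ext p
    induction p using OnePoint.rec with
    | infty =>
      simp only [ContinuousMap.add_apply, Smap_infty, integral_add_L1]
      ring
    | coe m =>
      simp only [ContinuousMap.add_apply, Smap_coe, integral_hW_add]
  · ext p
    induction p using OnePoint.rec with
    | infty =>
      simp only [RingHom.id_apply, ContinuousMap.smul_apply, Smap_infty, integral_smul_L1,
        smul_eq_mul]
      ring
    | coe m =>
      simp only [RingHom.id_apply, ContinuousMap.smul_apply, Smap_coe, integral_hW_smul,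
        smul_eq_mul]
  · rw [one_mul]
    refine (ContinuousMap.norm_le _ (norm_nonneg x)).mpr fun p => ?_
    show ‖Smap x p‖ ≤ ‖x‖
    induction p using OnePoint.rec with
    | infty =>
      rw [Smap_infty]
      have := norm_integral_le_L1 x
      rw [norm_div]
      simp only [norm_ofNat]
      linarith [norm_nonneg (∫ t, x t ∂μ₀)]
    | coe m =>
      rw [Smap_coe]
      exact norm_integral_hW_le x m

noncomputable def Top : Lp ℝ 1 μ₀ →L[ℝ] C(OnePoint ℕ, ℝ) := by
  refine LinearMap.mkContinuous
    { toFun := Tmap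
      map_add' := fun x y => ?_
      map_smul' := fun c x => ?_ } 1 (fun x => ?_)
  · ext p
    simp only [ContinuousMap.add_apply, Tmap_apply]
    exact integral_add_L1 x y
  · ext p
    simp only [RingHom.id_apply, ContinuousMap.smul_apply, Tmap_apply, smul_eq_mul]
    exact integral_smul_L1 c x
  · rw [one_mul]
    refine (ContinuousMap.norm_le _ (norm_nonneg x)).mpr fun p => ?_
    show ‖Tmap x p‖ ≤ ‖x‖
    rw [Tmap_apply]
    exact norm_integral_le_L1 x

@[simp] lemma Sop_apply (x : Lp ℝ 1 μ₀) : Sop x = Smap x := rfl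
@[simp] lemma Top_apply (x : Lp ℝ 1 μ₀) : Top x = Tmap x := rfl

/-! ### Integrals of the cosines against μ₀ -/

lemma integral_cosF_μ₀ (k : ℕ) (hk : k ≠ 0) : ∫ t, cosF k t ∂μ₀ = 0 := by
  rw [integral_μ₀_eq]
  have := integral_cosZ (k : ℤ) (by exact_mod_cast hk)
  push_cast at this
  unfold cosF
  exact this

lemma integral_cosF_sq_μ₀ (k : ℕ) (hk : k ≠ 0) :
    ∫ t, cosF k t * cosF k t ∂μ₀ = 1/2 := by
  rw [integral_μ₀_eq]
  have := integral_cos_mul_cos01 k k hk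
  rw [if_pos rfl] at this
  unfold cosF
  exact this

end WSDPCounterexample

open WSDPCounterexample in
/-- **The σ-Dedekind completeness assumption on the range cannot be dropped.**
There exist positive operators `S, T : L¹[0,1] → c` with `0 ≤ S ≤ T` such that `T` is a
weak* Dunford-Pettis operator while `S` is not. -/
theorem exists_dominated_not_weakStarDunfordPettis :
    ∃ S T : L1unitInterval →L[ℝ] ConvergentSeq,
      (∀ x : L1unitInterval, 0 ≤ x → 0 ≤ S x) ∧
      (∀ x : L1unitInterval, 0 ≤ x → S x ≤ T x) ∧
      IsWeakStarDunfordPettis T ∧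
      ¬ IsWeakStarDunfordPettis S := by
  refine ⟨Sop, Top, ?_, ?_, ?_, ?_⟩
  · -- positivity of S
    intro x hx
    have hx' : (0 : ℝ → ℝ) ≤ᵐ[μ₀] (x : ℝ → ℝ) := (Lp.coeFn_nonneg x).mpr hx
    rw [ContinuousMap.le_def]
    intro p
    simp only [ContinuousMap.zero_apply]
    show (0:ℝ) ≤ Smap x p
    induction p using OnePoint.rec with
    | infty =>
      rw [Smap_infty]
      exact div_nonneg (integral_nonneg_of_ae hx') (by norm_num)
    | coe m =>
      rw [Smap_coe]
      refine integral_nonneg_of_ae ?_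
      filter_upwards [hx'] with t ht
      exact mul_nonneg (hW_nonneg m t) ht
  · -- domination
    intro x hx
    have hx' : (0 : ℝ → ℝ) ≤ᵐ[μ₀] (x : ℝ → ℝ) := (Lp.coeFn_nonneg x).mpr hx
    rw [ContinuousMap.le_def]
    intro p
    show Smap x p ≤ Tmap x p
    rw [Tmap_apply]
    induction p using OnePoint.rec with
    | infty =>
      rw [Smap_infty]
      exact half_le_self (integral_nonneg_of_ae hx')
    | coe m =>
      rw [Smap_coe]
      refine integral_mono_ae (integrable_hW_mul x m) (L1.integrable_coeFn x) ?_
      filter_upwards [hx'] with t ht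
      calc hW m t * (x : ℝ → ℝ) t ≤ 1 * (x : ℝ → ℝ) t :=
            mul_le_mul_of_nonneg_right (hW_le_one m t) ht
        _ = (x : ℝ → ℝ) t := one_mul _
  · -- T is weak* Dunford-Pettis
    intro x f hx hf
    have hint : Tendsto (fun n => ∫ t, (x n : ℝ → ℝ) t ∂μ₀) atTop (𝓝 0) := by
      have := hx (MeasureTheory.L1.integralCLM)
      refine this.congr fun n => ?_
      rw [← MeasureTheory.L1.integral_eq, MeasureTheory.L1.integral_eq_integral]
    have hone := hf (ContinuousMap.const _ (1:ℝ))
    have hmul := hint.mul hone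
    rw [mul_zero] at hmul
    refine hmul.congr fun n => ?_
    have hTsmul : Top (x n)
        = (∫ t, (x n : ℝ → ℝ) t ∂μ₀) • ContinuousMap.const (OnePoint ℕ) (1:ℝ) := by
      ext p
      show Tmap (x n) p = _
      simp [Tmap_apply]
    rw [hTsmul, ContinuousLinearMap.map_smul, smul_eq_mul]
  · -- S is not weak* Dunford-Pettis
    intro h
    have hx : WeaklyNull (fun n => L2toL1 (cosL2 n)) := fun f => weaklyNull_cosL1 f
    set f : ℕ → ConvergentSeq →L[ℝ] ℝ := fun n =>
      ContinuousMap.evalCLM ℝ (((n+1 : ℕ)) : OnePoint ℕ)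
        - ContinuousMap.evalCLM ℝ (OnePoint.infty) with hfdef
    have hf : WeakStarNull f := by
      intro y
      have hy : Tendsto (fun n : ℕ => y ((n : ℕ) : OnePoint ℕ)) atTop
          (𝓝 (y OnePoint.infty)) := (OnePoint.continuous_iff_from_nat y).mp y.continuous
      have hy1 : Tendsto (fun n : ℕ => y (((n+1 : ℕ)) : OnePoint ℕ)) atTop
          (𝓝 (y OnePoint.infty)) := hy.comp (tendsto_add_atTop_nat 1)
      have hy2 := hy1.sub_const (y OnePoint.infty)
      rw [sub_self] at hy2
      refine hy2.congr fun n => ?_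
      simp [hfdef, ContinuousLinearMap.sub_apply, ContinuousMap.evalCLM]
    have hmain := h _ f hx hf
    have hval : ∀ n : ℕ, f n (Sop (L2toL1 (cosL2 n))) = 1/4 := by
      intro n
      have hcongr : (L2toL1 (cosL2 n) : ℝ → ℝ) =ᵐ[μ₀] cosF (n+1) :=
        (L2toL1_coeFn _).trans (cosL2_coeFn n)
      have hI : ∫ t, (L2toL1 (cosL2 n) : ℝ → ℝ) t ∂μ₀ = 0 := by
        rw [integral_congr_ae hcongr, integral_cosF_μ₀ (n+1) (Nat.succ_ne_zero n)]
      have hIc : ∫ t, hW (n+1) t * (L2toL1 (cosL2 n) : ℝ → ℝ) t ∂μ₀ = 1/4 := by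
        have e : ∫ t, hW (n+1) t * (L2toL1 (cosL2 n) : ℝ → ℝ) t ∂μ₀
            = ∫ t, hW (n+1) t * cosF (n+1) t ∂μ₀ := by
          refine integral_congr_ae ?_
          filter_upwards [hcongr] with t ht
          rw [ht]
        rw [e, hW_split (cosF (n+1))
            (memLp_one_iff_integrable.mp
              ((cosF_memL2 (n+1)).mono_exponent (by norm_num))) (n+1),
          integral_cosF_μ₀ (n+1) (Nat.succ_ne_zero n),
          integral_cosF_sq_μ₀ (n+1) (Nat.succ_ne_zero n)]
        norm_num
      simp only [hfdef, ContinuousLinearMap.sub_apply]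
      have e1 : (ContinuousMap.evalCLM ℝ (((n+1:ℕ)) : OnePoint ℕ))
          (Sop (L2toL1 (cosL2 n))) = 1/4 := by
        show Smap (L2toL1 (cosL2 n)) (((n+1:ℕ)) : OnePoint ℕ) = 1/4
        rw [Smap_coe, hIc]
      have e2 : (ContinuousMap.evalCLM ℝ (OnePoint.infty : OnePoint ℕ))
          (Sop (L2toL1 (cosL2 n))) = 0 := by
        show Smap (L2toL1 (cosL2 n)) OnePoint.infty = 0
        rw [Smap_infty, hI]
        norm_num
      rw [e1, e2, sub_zero]
    have hconst : Tendsto (fun _ : ℕ => (1/4 : ℝ)) atTop (𝓝 0) := by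
      refine hmain.congr fun n => hval n
    have := tendsto_nhds_unique hconst tendsto_const_nhds
    norm_num at this
end
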